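/- arXiv:2103.10289 — 9 statements merged into one kernel-verified Lean document; each statement's English description precedes it below -/
import Mathlib

section
/- Let (X,‖·‖) be a Banach space and let T : X → X be an enriched (b,θ,L)-almost contraction, i.e. there exist b ∈ [0,∞), θ ∈ (0,b+1) and L ≥ 0 such that ‖b(x−y) + Tx − Ty‖ ≤ θ‖x−y‖ + L‖b(x−y) + Tx − y‖ for all x,y ∈ X. Then: (1) the set of fixed points of T is nonempty; (2) there exists λ ∈ (0,1] such that for every x₀ ∈ X the Krasnoselskij iteration xₙ₊₁ = (1−λ)xₙ + λTxₙ converges to some fixed point x* of T; (3) with δ = θ/(b+1), the estimates ‖xₙ − x*‖ ≤ δⁿ/(1−δ)·‖x₀ − x₁‖ for n ≥ 0 and ‖xₙ − x*‖ ≤ δ/(1−δ)·‖xₙ₋₁ − xₙ‖ for n ≥ 1 hold. -/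
open Filter

/-- **Theorem.** Let `X` be a Banach space and `T : X → X` an enriched
`(b,θ,L)`-almost contraction: `b ≥ 0`, `θ ∈ (0,b+1)`, `L ≥ 0` and
`‖b(x−y) + Tx − Ty‖ ≤ θ‖x−y‖ + L‖b(x−y) + Tx − y‖` for all `x,y`. Then the
fixed point set of `T` is nonempty and there exists `λ ∈ (0,1]` such that for
every `x₀` the Krasnoselskij iteration `xₙ₊₁ = (1−λ)xₙ + λTxₙ` converges to
some fixed point `x*` of `T`, with the a priori and a posteriori estimates for
`δ = θ/(b+1)`. -/
theorem enriched_almost_contraction_fixed_point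
    {X : Type*} [NormedAddCommGroup X] [NormedSpace ℝ X] [CompleteSpace X]
    (T : X → X) (b θ L : ℝ) (hb : 0 ≤ b) (hθ : θ ∈ Set.Ioo 0 (b + 1)) (hL : 0 ≤ L)
    (hT : ∀ x y : X,
      ‖b • (x - y) + T x - T y‖ ≤ θ * ‖x - y‖ + L * ‖b • (x - y) + T x - y‖) :
    (∃ x : X, T x = x) ∧
    ∃ lam ∈ Set.Ioc (0 : ℝ) 1,
      ∀ x₀ : X, ∃ xs : X, T xs = xs ∧
        Filter.Tendsto (fun n => (fun z => (1 - lam) • z + lam • T z)^[n] x₀)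
          Filter.atTop (nhds xs) ∧
        (∀ n : ℕ, ‖(fun z => (1 - lam) • z + lam • T z)^[n] x₀ - xs‖ ≤
          (θ / (b + 1)) ^ n / (1 - θ / (b + 1)) *
            ‖x₀ - ((1 - lam) • x₀ + lam • T x₀)‖) ∧
        (∀ n : ℕ, 1 ≤ n →
          ‖(fun z => (1 - lam) • z + lam • T z)^[n] x₀ - xs‖ ≤
            (θ / (b + 1)) / (1 - θ / (b + 1)) *
              ‖(fun z => (1 - lam) • z + lam • T z)^[n - 1] x₀ -
                (fun z => (1 - lam) • z + lam • T z)^[n] x₀‖) := by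
  obtain ⟨hθ0, hθb⟩ := hθ
  have hb1 : (0:ℝ) < b + 1 := by linarith
  set lam : ℝ := 1 / (b + 1) with hlam
  have hlam0 : 0 < lam := by positivity
  have hlam1 : lam ≤ 1 := by
    rw [hlam, div_le_one hb1]; linarith
  set δ : ℝ := θ / (b + 1) with hδ
  have hδ0 : 0 < δ := by positivity
  have hδ1 : δ < 1 := by rw [hδ, div_lt_one hb1]; exact hθb
  set g : X → X := fun z => (1 - lam) • z + lam • T z with hg
  have hlb : 1 - lam = lam * b := by rw [hlam]; field_simp; ring
  have key : ∀ x y, ‖g x - g y‖ ≤ δ * ‖x - y‖ + L * ‖g x - y‖ := by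
    intro x y
    have e1 : g x - g y = lam • (b • (x - y) + T x - T y) := by
      simp only [hg]; rw [hlb]; module
    have e2 : g x - y = lam • (b • (x - y) + T x - y) := by
      simp only [hg]; rw [hlb]
      have : y = (lam * b) • y + lam • y := by
        rw [← add_smul, ← hlb]; module
      nth_rewrite 1 [this]; module
    calc ‖g x - g y‖ = lam * ‖b • (x - y) + T x - T y‖ := by
          rw [e1, norm_smul, Real.norm_eq_abs, abs_of_pos hlam0]
      _ ≤ lam * (θ * ‖x - y‖ + L * ‖b • (x - y) + T x - y‖) :=
          mul_le_mul_of_nonneg_left (hT x y) hlam0.le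
      _ = δ * ‖x - y‖ + L * ‖g x - y‖ := by
          rw [e2, norm_smul, Real.norm_eq_abs, abs_of_pos hlam0, hδ, hlam]; ring
  have keyB : ∀ x, ‖g x - g (g x)‖ ≤ δ * ‖x - g x‖ := by
    intro x
    have := key x (g x)
    simpa using this
  have main : ∀ x₀ : X, ∃ xs : X, T xs = xs ∧
      Filter.Tendsto (fun n => g^[n] x₀) Filter.atTop (nhds xs) ∧
      (∀ n : ℕ, ‖g^[n] x₀ - xs‖ ≤ δ ^ n / (1 - δ) * ‖x₀ - g x₀‖) ∧
      (∀ n : ℕ, 1 ≤ n → ‖g^[n] x₀ - xs‖ ≤ δ / (1 - δ) *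
        ‖g^[n-1] x₀ - g^[n] x₀‖) := by
    intro x₀
    set f : ℕ → X := fun n => g^[n] x₀ with hf
    have hsucc : ∀ n, f (n + 1) = g (f n) := by
      intro n; simp only [hf, Function.iterate_succ_apply']
    have hd' : ∀ m k, dist (f (m + k)) (f (m + k + 1)) ≤
        dist (f m) (f (m + 1)) * δ ^ k := by
      intro m k
      induction k with
      | zero => simp
      | succ k ih =>
        have h1 : dist (f (m + k + 1)) (f (m + k + 2)) ≤
            δ * dist (f (m + k)) (f (m + k + 1)) := by
          rw [dist_eq_norm, dist_eq_norm, hsucc (m + k + 1), hsucc (m + k)]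
          exact keyB (f (m + k))
        calc dist (f (m + (k+1))) (f (m + (k+1) + 1))
            = dist (f (m + k + 1)) (f (m + k + 2)) := by ring_nf
          _ ≤ δ * dist (f (m + k)) (f (m + k + 1)) := h1
          _ ≤ δ * (dist (f m) (f (m + 1)) * δ ^ k) :=
              mul_le_mul_of_nonneg_left ih hδ0.le
          _ = dist (f m) (f (m + 1)) * δ ^ (k + 1) := by ring
    have hd : ∀ n, dist (f n) (f (n + 1)) ≤ ‖x₀ - g x₀‖ * δ ^ n := by
      intro n
      have := hd' 0 n
      simpa [dist_eq_norm, hsucc 0, show f 0 = x₀ from rfl] using this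
    have hc : CauchySeq f := cauchySeq_of_le_geometric δ _ hδ1 hd
    obtain ⟨xs, hxs⟩ := cauchySeq_tendsto_of_complete hc
    have hnorm0 : Tendsto (fun n => ‖f n - xs‖) atTop (nhds 0) :=
      tendsto_iff_norm_sub_tendsto_zero.mp hxs
    have hshift : Tendsto (fun n => ‖f (n + 1) - xs‖) atTop (nhds 0) :=
      hnorm0.comp (tendsto_add_atTop_nat 1)
    -- fixed point of g
    have hgfix : g xs = xs := by
      have hbound : ∀ n : ℕ, ‖xs - g xs‖ ≤
          ‖xs - f (n + 1)‖ + (δ * ‖f n - xs‖ + L * ‖f (n + 1) - xs‖) := by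
        intro n
        have tri : ‖xs - g xs‖ ≤ ‖xs - f (n + 1)‖ + ‖f (n + 1) - g xs‖ := by
          have := norm_sub_le_norm_sub_add_norm_sub xs (f (n + 1)) (g xs)
          linarith
        have h2 : ‖f (n + 1) - g xs‖ ≤ δ * ‖f n - xs‖ + L * ‖f (n + 1) - xs‖ := by
          have := key (f n) xs
          rw [← hsucc n] at this
          exact this
        linarith
      have hlim : Tendsto (fun n : ℕ =>
          ‖xs - f (n + 1)‖ + (δ * ‖f n - xs‖ + L * ‖f (n + 1) - xs‖))
          atTop (nhds 0) := by
        have h1 : Tendsto (fun n : ℕ => ‖xs - f (n + 1)‖) atTop (nhds 0) := by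
          simpa [norm_sub_rev] using hshift
        have := h1.add ((hnorm0.const_mul δ).add (hshift.const_mul L))
        simpa using this
      have : ‖xs - g xs‖ ≤ 0 := ge_of_tendsto' hlim hbound
      have h0 : ‖xs - g xs‖ = 0 := le_antisymm this (norm_nonneg _)
      rw [norm_eq_zero, sub_eq_zero] at h0
      exact h0.symm
    have hTfix : T xs = xs := by
      have h1 : (1 - lam) • xs + lam • T xs = (1 - lam) • xs + lam • xs := by
        have h2 : (1 - lam) • xs + lam • xs = xs := by module
        rw [h2]; exact hgfix
      have h3 : lam • T xs = lam • xs := by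
        exact add_left_cancel h1
      exact smul_right_injective X (ne_of_gt hlam0) h3
    refine ⟨xs, hTfix, hxs, ?_, ?_⟩
    · intro n
      have := dist_le_of_le_geometric_of_tendsto δ _ hδ1 hd hxs n
      rw [dist_eq_norm] at this
      calc ‖f n - xs‖ ≤ ‖x₀ - g x₀‖ * δ ^ n / (1 - δ) := this
        _ = δ ^ n / (1 - δ) * ‖x₀ - g x₀‖ := by ring
    · intro n hn
      set F : ℕ → X := fun k => f (k + (n - 1)) with hF
      have hdF : ∀ k, dist (F k) (F (k + 1)) ≤
          dist (f (n - 1)) (f (n - 1 + 1)) * δ ^ k := by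
        intro k
        have := hd' (n - 1) k
        have e3 : k + 1 + (n - 1) = n - 1 + k + 1 := by omega
        show dist (f (k + (n - 1))) (f (k + 1 + (n - 1))) ≤ _
        rw [e3]
        have e : k + (n - 1) = n - 1 + k := by omega
        rw [e]
        exact this
      have hFt : Tendsto F atTop (nhds xs) := hxs.comp (tendsto_add_atTop_nat (n - 1))
      have := dist_le_of_le_geometric_of_tendsto δ _ hδ1 hdF hFt 1
      have e1 : F 1 = f n := by simp only [hF]; congr 1; omega
      have e2 : n - 1 + 1 = n := by omega
      rw [e1, e2, dist_eq_norm, dist_eq_norm, pow_one] at this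
      calc ‖f n - xs‖ ≤ ‖f (n - 1) - f n‖ * δ / (1 - δ) := this
        _ = δ / (1 - δ) * ‖f (n - 1) - f n‖ := by ring
  refine ⟨⟨(main 0).choose, (main 0).choose_spec.1⟩, lam, ⟨hlam0, hlam1⟩, main⟩
end

section
/- Let X be a normed space, T : X → X, b ∈ (0,∞), θ ∈ (0,b+1) and L ≥ 0 such that ‖b(x−y) + Tx − Ty‖ ≤ θ‖x−y‖ + L‖b(x−y) + Tx − y‖ for all x,y ∈ X. Set λ = 1/(b+1) and define the averaged operator T_λ x = (1−λ)x + λTx. Then, with δ = θ/(b+1) ∈ (0,1), the operator T_λ satisfies ‖T_λx − T_λy‖ ≤ δ‖x−y‖ + L‖T_λx − y‖ for all x,y ∈ X; that is, T_λ is a (δ,L)-almost contraction on X. -/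
/-- **Lemma (key step in the proof of the main theorem).** If `T : X → X` on a
normed space satisfies the enriched `(b,θ,L)`-almost contraction condition with
`b > 0`, `θ ∈ (0,b+1)`, `L ≥ 0`, then with `λ = 1/(b+1)` the averaged operator
`T_λ x = (1−λ)x + λTx` is a `(δ,L)`-almost contraction with `δ = θ/(b+1) ∈ (0,1)`:
`‖T_λx − T_λy‖ ≤ δ‖x−y‖ + L‖T_λx − y‖` for all `x,y`. -/
theorem averaged_operator_is_almost_contraction
    {X : Type*} [NormedAddCommGroup X] [NormedSpace ℝ X]
    (T : X → X) (b θ L : ℝ) (hb : 0 < b) (hθ : θ ∈ Set.Ioo 0 (b + 1)) (hL : 0 ≤ L)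
    (hT : ∀ x y : X,
      ‖b • (x - y) + T x - T y‖ ≤ θ * ‖x - y‖ + L * ‖b • (x - y) + T x - y‖) :
    θ / (b + 1) ∈ Set.Ioo (0 : ℝ) 1 ∧
    ∀ x y : X,
      ‖((1 - 1 / (b + 1)) • x + (1 / (b + 1)) • T x) -
          ((1 - 1 / (b + 1)) • y + (1 / (b + 1)) • T y)‖ ≤
        (θ / (b + 1)) * ‖x - y‖ +
          L * ‖((1 - 1 / (b + 1)) • x + (1 / (b + 1)) • T x) - y‖ := by
  obtain ⟨hθ0, hθ1⟩ := hθ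
  have hb1 : (0:ℝ) < b + 1 := by linarith
  have hbne : b + 1 ≠ 0 := ne_of_gt hb1
  have hlam : (0:ℝ) < 1 / (b + 1) := by positivity
  refine ⟨⟨by positivity, by rw [div_lt_one hb1]; exact hθ1⟩, ?_⟩
  intro x y
  have h1 : ((1 - 1/(b+1)) • x + (1/(b+1)) • T x) - ((1 - 1/(b+1)) • y + (1/(b+1)) • T y) =
      (1/(b+1)) • (b • (x - y) + T x - T y) := by
    match_scalars <;> field_simp <;> ring
  have h2 : ((1 - 1/(b+1)) • x + (1/(b+1)) • T x) - y =
      (1/(b+1)) • (b • (x - y) + T x - y) := by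
    match_scalars <;> field_simp <;> ring
  rw [h1, h2, norm_smul, norm_smul, Real.norm_eq_abs, abs_of_pos hlam]
  have := mul_le_mul_of_nonneg_left (hT x y) hlam.le
  calc 1/(b+1) * ‖b • (x - y) + T x - T y‖
      ≤ 1/(b+1) * (θ * ‖x - y‖ + L * ‖b • (x - y) + T x - y‖) := this
    _ = θ/(b+1) * ‖x - y‖ + L * (1/(b+1) * ‖b • (x - y) + T x - y‖) := by ring
end

section
/- Let (X,‖·‖) be a Banach space and T : X → X a (k,a)-enriched Kannan mapping, i.e. there exist a ∈ [0,1/2) and k ∈ [0,∞) such that ‖k(x−y) + Tx − Ty‖ ≤ a(‖x − Tx‖ + ‖y − Ty‖) for all x,y ∈ X. Then: (1) T has a unique fixed point p; (2) there exists λ ∈ (0,1] such that the Krasnoselskij iteration xₙ₊₁ = (1−λ)xₙ + λTxₙ converges to p for every x₀ ∈ X; (3) with δ = a/(1−a), the estimate ‖xₙ − p‖ ≤ δⁿ/(1−δ)·‖x₀ − x₁‖ holds for all n ≥ 0. -/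
/-- **Corollary (Berinde–Păcurar).** Let `X` be a Banach space and `T : X → X`
a `(k,a)`-enriched Kannan mapping: `a ∈ [0,1/2)`, `k ≥ 0` and
`‖k(x−y) + Tx − Ty‖ ≤ a(‖x − Tx‖ + ‖y − Ty‖)` for all `x,y`. Then `T` has a
unique fixed point `p`; there exists `λ ∈ (0,1]` such that the Krasnoselskij
iteration converges to `p` for every `x₀`, with the a priori estimate for
`δ = a/(1−a)`. -/
theorem enriched_kannan_fixed_point
    {X : Type*} [NormedAddCommGroup X] [NormedSpace ℝ X] [CompleteSpace X]
    (T : X → X) (k a : ℝ) (hk : 0 ≤ k) (ha : a ∈ Set.Ico (0 : ℝ) (1 / 2))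
    (hT : ∀ x y : X, ‖k • (x - y) + T x - T y‖ ≤ a * (‖x - T x‖ + ‖y - T y‖)) :
    ∃ p : X, T p = p ∧ (∀ q : X, T q = q → q = p) ∧
      ∃ lam ∈ Set.Ioc (0 : ℝ) 1,
        ∀ x₀ : X,
          Filter.Tendsto (fun n => (fun z => (1 - lam) • z + lam • T z)^[n] x₀)
            Filter.atTop (nhds p) ∧
          ∀ n : ℕ, ‖(fun z => (1 - lam) • z + lam • T z)^[n] x₀ - p‖ ≤
            (a / (1 - a)) ^ n / (1 - a / (1 - a)) *
              ‖x₀ - ((1 - lam) • x₀ + lam • T x₀)‖ := by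
  obtain ⟨ha0, ha2⟩ := ha
  have hk1 : (0:ℝ) < k + 1 := by linarith
  set lam : ℝ := 1 / (k + 1) with hlam
  have hlam_pos : 0 < lam := by positivity
  have hlam_le : lam ≤ 1 := by
    rw [hlam, div_le_one hk1]; linarith
  set f : X → X := fun z => (1 - lam) • z + lam • T z with hf
  have hlk : lam * k = 1 - lam := by
    rw [hlam]; field_simp; ring
  have h1a : (0:ℝ) < 1 - a := by linarith
  set δ : ℝ := a / (1 - a) with hδ
  have hδ0 : 0 ≤ δ := by positivity
  have hδ1 : δ < 1 := by
    rw [hδ, div_lt_one h1a]; linarith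
  -- the map `f` is a Kannan mapping
  have hsub : ∀ x : X, x - f x = lam • (x - T x) := by
    intro x
    simp only [hf, smul_sub, sub_smul, one_smul]
    abel
  have hdiff : ∀ x y : X, f x - f y = lam • (k • (x - y) + T x - T y) := by
    intro x y
    simp only [hf, smul_add, smul_sub, smul_smul, hlk, sub_smul, one_smul]
    abel
  have key : ∀ x y : X, ‖f x - f y‖ ≤ a * (‖x - f x‖ + ‖y - f y‖) := by
    intro x y
    rw [hdiff, hsub, hsub, norm_smul, norm_smul, norm_smul]
    have := hT x y
    have hl : ‖lam‖ = lam := Real.norm_of_nonneg hlam_pos.le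
    rw [hl]
    calc lam * ‖k • (x - y) + T x - T y‖ ≤ lam * (a * (‖x - T x‖ + ‖y - T y‖)) := by
          exact mul_le_mul_of_nonneg_left this hlam_pos.le
      _ = a * (lam * ‖x - T x‖ + lam * ‖y - T y‖) := by ring
  -- for each starting point, the iteration converges to a fixed point of f
  have main : ∀ x₀ : X, ∃ q : X,
      Filter.Tendsto (fun n => f^[n] x₀) Filter.atTop (nhds q) ∧ f q = q ∧
      ∀ n : ℕ, dist (f^[n] x₀) q ≤ dist x₀ (f x₀) * δ ^ n / (1 - δ) := by
    intro x₀
    set u : ℕ → X := fun n => f^[n] x₀ with hu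
    have hstep : ∀ n, u (n + 1) = f (u n) := by
      intro n; simp [hu, Function.iterate_succ_apply']
    have hcons : ∀ n, dist (u (n + 1)) (u (n + 2)) ≤ δ * dist (u n) (u (n + 1)) := by
      intro n
      have h := key (u n) (u (n + 1))
      rw [← hstep n, ← hstep (n + 1)] at h
      have e1 : dist (u (n+1)) (u (n+2)) = ‖u (n+1) - u (n+2)‖ := dist_eq_norm _ _
      have e0 : dist (u n) (u (n+1)) = ‖u n - u (n+1)‖ := dist_eq_norm _ _
      rw [hδ, div_mul_eq_mul_div, le_div_iff₀ h1a, e1, e0]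
      nlinarith [h, norm_nonneg (u n - u (n+1)), norm_nonneg (u (n+1) - u (n+2))]
    have hgeo : ∀ n, dist (u n) (u (n + 1)) ≤ dist x₀ (f x₀) * δ ^ n := by
      intro n
      induction n with
      | zero => simp [hu, hstep]
      | succ n ih =>
        calc dist (u (n+1)) (u (n+2)) ≤ δ * dist (u n) (u (n+1)) := hcons n
          _ ≤ δ * (dist x₀ (f x₀) * δ ^ n) := by
              exact mul_le_mul_of_nonneg_left ih hδ0
          _ = dist x₀ (f x₀) * δ ^ (n+1) := by ring
    have hcauchy : CauchySeq u := cauchySeq_of_le_geometric δ _ hδ1 hgeo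
    obtain ⟨q, hq⟩ := cauchySeq_tendsto_of_complete hcauchy
    refine ⟨q, hq, ?_, fun n => dist_le_of_le_geometric_of_tendsto δ _ hδ1 hgeo hq n⟩
    -- q is a fixed point of f
    have hbound : ∀ n : ℕ, (1 - a) * dist q (f q) ≤
        dist q (u (n + 1)) + a * (dist x₀ (f x₀) * δ ^ n) := by
      intro n
      have h := key (u n) q
      rw [← hstep n] at h
      have htri : dist q (f q) ≤ dist q (u (n + 1)) + ‖u (n+1) - f q‖ := by
        rw [show ‖u (n+1) - f q‖ = dist (u (n+1)) (f q) from (dist_eq_norm _ _).symm]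
        exact dist_triangle _ _ _
      have e0 : ‖u n - u (n+1)‖ = dist (u n) (u (n+1)) := (dist_eq_norm _ _).symm
      have e1 : ‖q - f q‖ = dist q (f q) := (dist_eq_norm _ _).symm
      rw [e0, e1] at h
      have hg := hgeo n
      nlinarith [dist_nonneg (x := q) (y := f q)]
    have hlim : Filter.Tendsto
        (fun n => dist q (u (n + 1)) + a * (dist x₀ (f x₀) * δ ^ n))
        Filter.atTop (nhds 0) := by
      have h1 : Filter.Tendsto (fun n => dist q (u (n + 1))) Filter.atTop (nhds 0) := by
        have := (tendsto_iff_dist_tendsto_zero.mp hq)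
        have h2 := this.comp (Filter.tendsto_add_atTop_nat 1)
        simpa [Function.comp_def, dist_comm] using h2
      have h2 : Filter.Tendsto (fun n : ℕ => a * (dist x₀ (f x₀) * δ ^ n))
          Filter.atTop (nhds 0) := by
        have := tendsto_pow_atTop_nhds_zero_of_lt_one hδ0 hδ1
        simpa using (this.const_mul (dist x₀ (f x₀))).const_mul a
      simpa using h1.add h2
    have hle : (1 - a) * dist q (f q) ≤ 0 :=
      ge_of_tendsto hlim (Filter.Eventually.of_forall hbound)
    have hd0 : dist q (f q) = 0 := le_antisymm (by nlinarith [dist_nonneg (x := q) (y := f q)]) dist_nonneg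
    exact (dist_eq_zero.mp hd0).symm
  -- fixed points of f are fixed points of T and vice versa
  have hfix : ∀ q : X, f q = q ↔ T q = q := by
    intro q
    constructor
    · intro h
      have h0 : lam • (q - T q) = 0 := by rw [← hsub q, h, sub_self]
      rcases smul_eq_zero.mp h0 with h' | h'
      · exact absurd h' (ne_of_gt hlam_pos)
      · rw [sub_eq_zero] at h'
        exact h'.symm
    · intro h
      simp [hf, h, ← add_smul]
  obtain ⟨p, hp_tend, hp_fix, hp_est⟩ := main 0
  have hTp : T p = p := (hfix p).mp hp_fix
  refine ⟨p, hTp, ?_, lam, ⟨hlam_pos, hlam_le⟩, ?_⟩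
  · intro q hq
    have hfq : f q = q := (hfix q).mpr hq
    have h := key q p
    rw [hfq, hp_fix] at h
    simp only [sub_self, norm_zero, add_zero, mul_zero] at h
    have : ‖q - p‖ = 0 := le_antisymm h (norm_nonneg _)
    rwa [norm_eq_zero, sub_eq_zero] at this
  · intro x₀
    obtain ⟨q, hq_tend, hq_fix, hq_est⟩ := main x₀
    have hq_p : q = p := by
      have hTq : T q = q := (hfix q).mp hq_fix
      have h := key q p
      rw [hq_fix, hp_fix] at h
      simp only [sub_self, norm_zero, add_zero, mul_zero] at h
      have : ‖q - p‖ = 0 := le_antisymm h (norm_nonneg _)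
      rwa [norm_eq_zero, sub_eq_zero] at this
    subst hq_p
    refine ⟨hq_tend, fun n => ?_⟩
    have := hq_est n
    rw [dist_eq_norm] at this
    have e : dist x₀ (f x₀) = ‖x₀ - ((1 - lam) • x₀ + lam • T x₀)‖ := by
      rw [dist_eq_norm]
    rw [e] at this
    calc ‖f^[n] x₀ - q‖ ≤ ‖x₀ - ((1 - lam) • x₀ + lam • T x₀)‖ * δ ^ n / (1 - δ) := this
      _ = δ ^ n / (1 - δ) * ‖x₀ - ((1 - lam) • x₀ + lam • T x₀)‖ := by ring
end

section
/- Let (X,‖·‖) be a Banach space and T : X → X a (k,h)-enriched Bianchini mapping, i.e. there exist h ∈ [0,1) and k ∈ [0,∞) such that ‖k(x−y) + Tx − Ty‖ ≤ h·max{‖x − Tx‖, ‖y − Ty‖} for all x,y ∈ X. Then: (1) T has a unique fixed point p; (2) there exists λ ∈ (0,1] such that the Krasnoselskij iteration xₙ₊₁ = (1−λ)xₙ + λTxₙ converges to p for every x₀ ∈ X; (3) the estimate ‖xₙ − p‖ ≤ hⁿ/(1−h)·‖x₀ − x₁‖ holds for all n ≥ 0. -/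
/-- Auxiliary: a Bianchini (Kannan-type) mapping on a complete normed group has
a unique fixed point, Picard iteration converges with geometric rate. -/
theorem bianchini_aux {X : Type*} [NormedAddCommGroup X] [CompleteSpace X]
    (S : X → X) (h : ℝ) (h0 : 0 ≤ h) (h1 : h < 1)
    (hS : ∀ x y : X, ‖S x - S y‖ ≤ h * max ‖x - S x‖ ‖y - S y‖) :
    ∃ p : X, S p = p ∧ (∀ q : X, S q = q → q = p) ∧
      ∀ x₀ : X,
        Filter.Tendsto (fun n => S^[n] x₀) Filter.atTop (nhds p) ∧
        ∀ n : ℕ, ‖S^[n] x₀ - p‖ ≤ h ^ n / (1 - h) * ‖x₀ - S x₀‖ := by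
  have huniq : ∀ p q : X, S p = p → S q = q → q = p := by
    intro p q hp hq
    have := hS q p
    rw [hq, hp] at this
    simp only [sub_self, norm_zero, max_self, mul_zero] at this
    exact sub_eq_zero.mp (norm_le_zero_iff.mp this)
  have key : ∀ x₀ : X, ∃ p : X, S p = p ∧
      Filter.Tendsto (fun n => S^[n] x₀) Filter.atTop (nhds p) ∧
      ∀ n : ℕ, ‖S^[n] x₀ - p‖ ≤ h ^ n / (1 - h) * ‖x₀ - S x₀‖ := by
    intro x₀
    set x : ℕ → X := fun n => S^[n] x₀ with hx
    have hxsucc : ∀ n, x (n + 1) = S (x n) := fun n =>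
      Function.iterate_succ_apply' S n x₀
    have hd : ∀ n, ‖x (n+1) - x (n+2)‖ ≤ h * ‖x n - x (n+1)‖ := by
      intro n
      have H := hS (x n) (x (n+1))
      rw [← hxsucc n, ← hxsucc (n+1)] at H
      rcases max_cases ‖x n - x (n+1)‖ ‖x (n+1) - x (n+2)‖ with ⟨he, _⟩ | ⟨he, _⟩
      · rw [he] at H; exact H
      · rw [he] at H
        nlinarith [norm_nonneg (x (n+1) - x (n+2)), norm_nonneg (x n - x (n+1))]
    have hgeo : ∀ n, ‖x n - x (n+1)‖ ≤ ‖x 0 - x 1‖ * h ^ n := by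
      intro n
      induction n with
      | zero => simp
      | succ n ih =>
        calc ‖x (n+1) - x (n+2)‖ ≤ h * ‖x n - x (n+1)‖ := hd n
          _ ≤ h * (‖x 0 - x 1‖ * h ^ n) := by
              exact mul_le_mul_of_nonneg_left ih h0
          _ = ‖x 0 - x 1‖ * h ^ (n+1) := by ring
    have hdist : ∀ n, dist (x n) (x (n+1)) ≤ ‖x 0 - x 1‖ * h ^ n := by
      intro n; rw [dist_eq_norm]; exact hgeo n
    have hcauchy : CauchySeq x := cauchySeq_of_le_geometric h _ h1 hdist
    obtain ⟨p, hp⟩ := cauchySeq_tendsto_of_complete hcauchy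
    have hx01 : x 1 = S x₀ := by simp [hx]
    have hx00 : x 0 = x₀ := by simp [hx]
    have hest : ∀ n, ‖x n - p‖ ≤ h ^ n / (1 - h) * ‖x₀ - S x₀‖ := by
      intro n
      have := dist_le_of_le_geometric_of_tendsto h _ h1 hdist hp n
      rw [dist_eq_norm] at this
      calc ‖x n - p‖ ≤ ‖x₀ - S x₀‖ * h ^ n / (1 - h) := by
            rw [hx00, hx01] at this; exact this
        _ = h ^ n / (1 - h) * ‖x₀ - S x₀‖ := by ring
    have hfix : S p = p := by
      have hle : ∀ n, ‖x (n+1) - S p‖ ≤ h * max (‖x 0 - x 1‖ * h ^ n) ‖p - S p‖ := by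
        intro n
        have H := hS (x n) p
        rw [← hxsucc n] at H
        refine H.trans ?_
        apply mul_le_mul_of_nonneg_left _ h0
        exact max_le_max (hgeo n) le_rfl
      have t1 : Filter.Tendsto (fun n => ‖x (n+1) - S p‖) Filter.atTop
          (nhds ‖p - S p‖) :=
        ((hp.comp (Filter.tendsto_add_atTop_nat 1)).sub tendsto_const_nhds).norm
      have t2 : Filter.Tendsto (fun n => h * max (‖x 0 - x 1‖ * h ^ n) ‖p - S p‖)
          Filter.atTop (nhds (h * max 0 ‖p - S p‖)) := by
        apply Filter.Tendsto.const_mul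
        apply Filter.Tendsto.max _ tendsto_const_nhds
        have := (tendsto_pow_atTop_nhds_zero_of_lt_one h0 h1).const_mul (‖x 0 - x 1‖)
        simpa using this
      have hle' : ‖p - S p‖ ≤ h * max 0 ‖p - S p‖ :=
        le_of_tendsto_of_tendsto' t1 t2 hle
      rw [max_eq_right (norm_nonneg _)] at hle'
      have : ‖p - S p‖ ≤ 0 := by nlinarith [norm_nonneg (p - S p)]
      have := norm_le_zero_iff.mp this
      exact (sub_eq_zero.mp this).symm
    exact ⟨p, hfix, hp, hest⟩
  obtain ⟨p, hpfix, hptend, hpest⟩ := key 0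
  refine ⟨p, hpfix, fun q hq => huniq p q hpfix hq, fun x₀ => ?_⟩
  obtain ⟨p', hp'fix, hp'tend, hp'est⟩ := key x₀
  have := huniq p p' hpfix hp'fix
  rw [this] at hp'tend hp'est
  exact ⟨hp'tend, hp'est⟩

/-- **Corollary (Berinde–Păcurar).** Let `X` be a Banach space and `T : X → X`
a `(k,h)`-enriched Bianchini mapping: `h ∈ [0,1)`, `k ≥ 0` and
`‖k(x−y) + Tx − Ty‖ ≤ h·max{‖x − Tx‖, ‖y − Ty‖}` for all `x,y`. Then `T` has a
unique fixed point `p`; there exists `λ ∈ (0,1]` such that the Krasnoselskij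
iteration converges to `p` for every `x₀`, with the a priori estimate
`‖xₙ − p‖ ≤ hⁿ/(1−h)·‖x₀ − x₁‖`. -/
theorem enriched_bianchini_fixed_point
    {X : Type*} [NormedAddCommGroup X] [NormedSpace ℝ X] [CompleteSpace X]
    (T : X → X) (k h : ℝ) (hk : 0 ≤ k) (hh : h ∈ Set.Ico (0 : ℝ) 1)
    (hT : ∀ x y : X, ‖k • (x - y) + T x - T y‖ ≤ h * max ‖x - T x‖ ‖y - T y‖) :
    ∃ p : X, T p = p ∧ (∀ q : X, T q = q → q = p) ∧
      ∃ lam ∈ Set.Ioc (0 : ℝ) 1,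
        ∀ x₀ : X,
          Filter.Tendsto (fun n => (fun z => (1 - lam) • z + lam • T z)^[n] x₀)
            Filter.atTop (nhds p) ∧
          ∀ n : ℕ, ‖(fun z => (1 - lam) • z + lam • T z)^[n] x₀ - p‖ ≤
            h ^ n / (1 - h) * ‖x₀ - ((1 - lam) • x₀ + lam • T x₀)‖ := by
  obtain ⟨h0, h1⟩ := hh
  have hk1 : (0:ℝ) < k + 1 := by linarith
  set lam : ℝ := (k + 1)⁻¹ with hlam
  have hlam0 : 0 < lam := inv_pos.mpr hk1
  have hlam1 : lam ≤ 1 := by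
    rw [hlam]
    rw [inv_le_one_iff₀]
    right; linarith
  set S : X → X := fun z => (1 - lam) • z + lam • T z with hSdef
  have hxSx : ∀ x : X, x - S x = lam • (x - T x) := by
    intro x
    show x - ((1 - lam) • x + lam • T x) = lam • (x - T x)
    module
  have hSxy : ∀ x y : X, S x - S y = lam • (k • (x - y) + T x - T y) := by
    intro x y
    have hlk : (1:ℝ) - lam = lam * k := by
      rw [hlam]; field_simp; ring
    show ((1 - lam) • x + lam • T x) - ((1 - lam) • y + lam • T y) =
      lam • (k • (x - y) + T x - T y)
    rw [hlk]
    module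
  have hS : ∀ x y : X, ‖S x - S y‖ ≤ h * max ‖x - S x‖ ‖y - S y‖ := by
    intro x y
    rw [hSxy, hxSx, hxSx, norm_smul, norm_smul, norm_smul,
      Real.norm_eq_abs, abs_of_pos hlam0]
    calc lam * ‖k • (x - y) + T x - T y‖
        ≤ lam * (h * max ‖x - T x‖ ‖y - T y‖) :=
          mul_le_mul_of_nonneg_left (hT x y) hlam0.le
      _ = h * (lam * max ‖x - T x‖ ‖y - T y‖) := by ring
      _ = h * max (lam * ‖x - T x‖) (lam * ‖y - T y‖) := by
          rw [mul_max_of_nonneg _ _ hlam0.le]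
  obtain ⟨p, hpfix, huniq, hconv⟩ := bianchini_aux S h h0 h1 hS
  have hTp : T p = p := by
    have h1' : p - S p = lam • (p - T p) := hxSx p
    rw [hpfix, sub_self] at h1'
    have := (smul_eq_zero.mp h1'.symm).resolve_left (by positivity)
    exact (sub_eq_zero.mp this).symm
  refine ⟨p, hTp, ?_, lam, ⟨hlam0, hlam1⟩, fun x₀ => hconv x₀⟩
  intro q hq
  apply huniq
  show (1 - lam) • q + lam • T q = q
  rw [hq]
  module
end

section
/- Let (X,‖·‖) be a Banach space and T : X → X a (k,b)-enriched Chatterjea mapping, i.e. there exist b ∈ [0,1/2) and k ∈ [0,∞) such that ‖k(x−y) + Tx − Ty‖ ≤ b(‖(k+1)(x−y) + y − Ty‖ + ‖(k+1)(y−x) + x − Tx‖) for all x,y ∈ X. Then: (1) T has a unique fixed point p; (2) there exists λ ∈ (0,1] such that the Krasnoselskij iteration xₙ₊₁ = (1−λ)xₙ + λTxₙ converges to p for every x₀ ∈ X; (3) with δ = b/(1−b), the estimate ‖xₙ − p‖ ≤ δⁿ/(1−δ)·‖x₀ − x₁‖ holds for all n ≥ 0. -/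
open Filter

/-- **Corollary (Berinde–Păcurar).** Let `X` be a Banach space and `T : X → X`
a `(k,b)`-enriched Chatterjea mapping: `b ∈ [0,1/2)`, `k ≥ 0` and
`‖k(x−y) + Tx − Ty‖ ≤ b(‖(k+1)(x−y) + y − Ty‖ + ‖(k+1)(y−x) + x − Tx‖)` for all
`x,y`. Then `T` has a unique fixed point `p`; there exists `λ ∈ (0,1]` such that
the Krasnoselskij iteration converges to `p` for every `x₀`, with the a priori
estimate for `δ = b/(1−b)`. -/
theorem enriched_chatterjea_fixed_point
    {X : Type*} [NormedAddCommGroup X] [NormedSpace ℝ X] [CompleteSpace X]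
    (T : X → X) (k b : ℝ) (hk : 0 ≤ k) (hb : b ∈ Set.Ico (0 : ℝ) (1 / 2))
    (hT : ∀ x y : X, ‖k • (x - y) + T x - T y‖ ≤
      b * (‖(k + 1) • (x - y) + y - T y‖ + ‖(k + 1) • (y - x) + x - T x‖)) :
    ∃ p : X, T p = p ∧ (∀ q : X, T q = q → q = p) ∧
      ∃ lam ∈ Set.Ioc (0 : ℝ) 1,
        ∀ x₀ : X,
          Filter.Tendsto (fun n => (fun z => (1 - lam) • z + lam • T z)^[n] x₀)
            Filter.atTop (nhds p) ∧
          ∀ n : ℕ, ‖(fun z => (1 - lam) • z + lam • T z)^[n] x₀ - p‖ ≤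
            (b / (1 - b)) ^ n / (1 - b / (1 - b)) *
              ‖x₀ - ((1 - lam) • x₀ + lam • T x₀)‖ := by
  obtain ⟨hb0, hb2⟩ := hb
  have hk1 : (0:ℝ) < k + 1 := by linarith
  set lam : ℝ := (k + 1)⁻¹ with hlamdef
  have hlam0 : 0 < lam := inv_pos.mpr hk1
  have hlam1 : lam ≤ 1 := by
    rw [hlamdef]
    rw [inv_le_one_iff₀]; right; linarith
  have hlamk1 : lam * (k + 1) = 1 := inv_mul_cancel₀ (ne_of_gt hk1)
  have hlamk : lam * k = 1 - lam := by
    have : lam * k + lam * 1 = 1 := by rw [← mul_add]; exact hlamk1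
    linarith
  set f : X → X := fun z => (1 - lam) • z + lam • T z with hfdef
  have hb1 : 1 - b > 0 := by linarith
  set δ : ℝ := b / (1 - b) with hδdef
  have hδ0 : 0 ≤ δ := div_nonneg hb0 (le_of_lt hb1)
  have hδ1 : δ < 1 := by
    rw [hδdef, div_lt_one hb1]; linarith
  have h1δ : 0 < 1 - δ := by linarith
  -- the two algebraic identities
  have hid1 : ∀ x y : X, f x - f y = lam • (k • (x - y) + T x - T y) := by
    intro x y
    simp only [hfdef, smul_add, smul_sub, smul_smul, hlamk]
    module
  have hid2 : ∀ x y : X, x - f y = lam • ((k + 1) • (x - y) + y - T y) := by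
    intro x y
    simp only [hfdef, smul_add, smul_sub, smul_smul, hlamk1]
    module
  -- Chatterjea property for f
  have key : ∀ x y : X, ‖f x - f y‖ ≤ b * (‖x - f y‖ + ‖y - f x‖) := by
    intro x y
    have h1 := hT x y
    have e1 : ‖f x - f y‖ = lam * ‖k • (x - y) + T x - T y‖ := by
      rw [hid1, norm_smul, Real.norm_eq_abs, abs_of_pos hlam0]
    have e2 : ‖x - f y‖ = lam * ‖(k + 1) • (x - y) + y - T y‖ := by
      rw [hid2, norm_smul, Real.norm_eq_abs, abs_of_pos hlam0]
    have e3 : ‖y - f x‖ = lam * ‖(k + 1) • (y - x) + x - T x‖ := by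
      rw [hid2, norm_smul, Real.norm_eq_abs, abs_of_pos hlam0]
    rw [e1, e2, e3]
    calc lam * ‖k • (x - y) + T x - T y‖
        ≤ lam * (b * (‖(k + 1) • (x - y) + y - T y‖ + ‖(k + 1) • (y - x) + x - T x‖)) :=
          mul_le_mul_of_nonneg_left h1 (le_of_lt hlam0)
      _ = b * (lam * ‖(k + 1) • (x - y) + y - T y‖ + lam * ‖(k + 1) • (y - x) + x - T x‖) := by
          ring
  -- consecutive step contraction
  have step : ∀ x : X, ‖f x - f (f x)‖ ≤ δ * ‖x - f x‖ := by
    intro x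
    have h1 := key x (f x)
    have h2 : ‖x - f (f x)‖ ≤ ‖x - f x‖ + ‖f x - f (f x)‖ := norm_sub_le_norm_sub_add_norm_sub _ _ _
    have h3 : ‖f x - f (f x)‖ ≤ b * (‖x - f x‖ + ‖f x - f (f x)‖) := by
      have : ‖f x - f x‖ = 0 := by simp
      calc ‖f x - f (f x)‖ ≤ b * (‖x - f (f x)‖ + ‖f x - f x‖) := h1
        _ = b * ‖x - f (f x)‖ := by rw [this]; ring
        _ ≤ b * (‖x - f x‖ + ‖f x - f (f x)‖) := mul_le_mul_of_nonneg_left h2 hb0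
    have h4 : (1 - b) * ‖f x - f (f x)‖ ≤ b * ‖x - f x‖ := by nlinarith
    rw [hδdef, div_mul_eq_mul_div, le_div_iff₀ hb1]
    nlinarith
  -- geometric bound on consecutive iterates
  have geom : ∀ x₀ : X, ∀ n : ℕ,
      dist (f^[n] x₀) (f^[n+1] x₀) ≤ ‖x₀ - f x₀‖ * δ ^ n := by
    intro x₀
    intro n
    induction n with
    | zero => simp [dist_eq_norm]
    | succ n ih =>
        have h1 : f^[n+1] x₀ = f (f^[n] x₀) := Function.iterate_succ_apply' f n x₀
        have h2 : f^[n+2] x₀ = f (f^[n+1] x₀) := Function.iterate_succ_apply' f (n+1) x₀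
        have h3 := step (f^[n] x₀)
        rw [dist_eq_norm, h2, h1]
        calc ‖f (f^[n] x₀) - f (f (f^[n] x₀))‖ ≤ δ * ‖f^[n] x₀ - f (f^[n] x₀)‖ := step _
          _ = δ * dist (f^[n] x₀) (f^[n+1] x₀) := by rw [dist_eq_norm, h1]
          _ ≤ δ * (‖x₀ - f x₀‖ * δ ^ n) := mul_le_mul_of_nonneg_left ih hδ0
          _ = ‖x₀ - f x₀‖ * δ ^ (n+1) := by ring
  -- for every start, the iteration converges to a fixed point of f with the estimate
  have main : ∀ x₀ : X, ∃ q : X, f q = q ∧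
      Tendsto (fun n => f^[n] x₀) atTop (nhds q) ∧
      ∀ n : ℕ, dist (f^[n] x₀) q ≤ ‖x₀ - f x₀‖ * δ ^ n / (1 - δ) := by
    intro x₀
    have hcauchy : CauchySeq (fun n => f^[n] x₀) :=
      cauchySeq_of_le_geometric δ (‖x₀ - f x₀‖) hδ1 (geom x₀)
    obtain ⟨q, hq⟩ := cauchySeq_tendsto_of_complete hcauchy
    refine ⟨q, ?_, hq, ?_⟩
    · -- q is a fixed point of f
      have h1 : Tendsto (fun n => f^[n+1] x₀) atTop (nhds q) :=
        hq.comp (tendsto_add_atTop_nat 1)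
      have h2 : Tendsto (fun n => ‖f q - f^[n+1] x₀‖) atTop (nhds ‖f q - q‖) :=
        (tendsto_const_nhds.sub h1).norm
      have h3 : Tendsto (fun n => b * (‖q - f^[n+1] x₀‖ + ‖f^[n] x₀ - f q‖)) atTop
          (nhds (b * (‖q - q‖ + ‖q - f q‖))) :=
        (((tendsto_const_nhds.sub h1).norm.add ((hq.sub tendsto_const_nhds).norm))).const_mul b
      have h4 : ‖f q - q‖ ≤ b * (‖q - q‖ + ‖q - f q‖) := by
        refine le_of_tendsto_of_tendsto' h2 h3 ?_
        intro n
        have := key q (f^[n] x₀)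
        rwa [← Function.iterate_succ_apply' f n x₀] at this
      have h5 : ‖f q - q‖ ≤ b * ‖f q - q‖ := by
        rw [norm_sub_rev q (f q)] at h4
        simpa using h4
      have h6 : ‖f q - q‖ = 0 := by nlinarith [norm_nonneg (f q - q)]
      have := norm_eq_zero.mp h6
      exact sub_eq_zero.mp this
    · intro n
      have := dist_le_of_le_geometric_of_tendsto δ (‖x₀ - f x₀‖) hδ1 (geom x₀) hq n
      calc dist (f^[n] x₀) q ≤ ‖x₀ - f x₀‖ * δ ^ n / (1 - δ) := this
        _ = ‖x₀ - f x₀‖ * δ ^ n / (1 - δ) := rfl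
  -- get the fixed point from starting at 0
  obtain ⟨p, hfp, _, _⟩ := main 0
  -- f-fixed iff T-fixed
  have fixed_iff : ∀ z : X, f z = z ↔ T z = z := by
    intro z
    constructor
    · intro h
      have h1 : (1 - lam) • z + lam • T z = z := h
      have h2 : lam • T z = lam • z := by
        have h3 : lam • T z = z - (1 - lam) • z := eq_sub_of_add_eq' h1
        rw [h3]; module
      exact smul_right_injective X (ne_of_gt hlam0) h2
    · intro h
      show (1 - lam) • z + lam • T z = z
      rw [h]; module
  -- uniqueness of T-fixed points
  have uniq : ∀ q : X, T q = q → q = p := by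
    intro q hq
    have hfq : f q = q := (fixed_iff q).mpr hq
    have h1 := key q p
    rw [hfq, hfp] at h1
    have h2 : ‖q - p‖ ≤ 2 * b * ‖q - p‖ := by
      rw [norm_sub_rev p q] at h1
      linarith
    have h3 : ‖q - p‖ = 0 := by nlinarith [norm_nonneg (q - p)]
    exact sub_eq_zero.mp (norm_eq_zero.mp h3)
  refine ⟨p, (fixed_iff p).mp hfp, uniq, lam, ⟨hlam0, hlam1⟩, ?_⟩
  intro x₀
  obtain ⟨q, hfq, htend, hest⟩ := main x₀
  have hqp : q = p := uniq q ((fixed_iff q).mp hfq)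
  subst hqp
  constructor
  · exact htend
  · intro n
    have := hest n
    rw [dist_eq_norm] at this
    calc ‖f^[n] x₀ - q‖ ≤ ‖x₀ - f x₀‖ * δ ^ n / (1 - δ) := this
      _ = δ ^ n / (1 - δ) * ‖x₀ - f x₀‖ := by ring
end

section
/- Let T : [0,4/3] → [0,4/3] be defined by Tx = 1 − x if x ∈ [0,2/3) and Tx = 2 − x if x ∈ [2/3,4/3]. Then for every θ ∈ (0,2), T is a (1,θ,3)-enriched almost contraction, i.e. |(x−y) + Tx − Ty| ≤ θ|x−y| + 3|(x−y) + Tx − y| for all x,y ∈ [0,4/3]. -/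
/-- **Example.** The map `T : [0,4/3] → [0,4/3]` defined by `Tx = 1 − x` on
`[0,2/3)` and `Tx = 2 − x` on `[2/3,4/3]` is a `(1,θ,3)`-enriched almost
contraction for every `θ ∈ (0,2)`. -/
theorem example_is_enriched_almost_contraction
    (T : ℝ → ℝ)
    (hT1 : ∀ x ∈ Set.Ico (0 : ℝ) (2 / 3), T x = 1 - x)
    (hT2 : ∀ x ∈ Set.Icc (2 / 3 : ℝ) (4 / 3), T x = 2 - x) :
    ∀ θ ∈ Set.Ioo (0 : ℝ) 2, ∀ x ∈ Set.Icc (0 : ℝ) (4 / 3),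
      ∀ y ∈ Set.Icc (0 : ℝ) (4 / 3),
        |(x - y) + T x - T y| ≤ θ * |x - y| + 3 * |(x - y) + T x - y| := by
  rintro θ ⟨hθ0, hθ2⟩ x ⟨hx0, hx1⟩ y ⟨hy0, hy1⟩
  have h1 : (0:ℝ) ≤ θ * |x - y| := mul_nonneg hθ0.le (abs_nonneg _)
  rcases lt_or_ge x (2/3) with hx | hx <;> rcases lt_or_ge y (2/3) with hy | hy
  · rw [hT1 x ⟨hx0, hx⟩, hT1 y ⟨hy0, hy⟩]
    have : x - y + (1 - x) - (1 - y) = 0 := by ring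
    rw [this, abs_zero]
    positivity
  · rw [hT1 x ⟨hx0, hx⟩, hT2 y ⟨hy, hy1⟩]
    have e1 : x - y + (1 - x) - (2 - y) = -1 := by ring
    have e2 : x - y + (1 - x) - y = 1 - 2*y := by ring
    rw [e1, e2]
    have : |1 - 2*y| = 2*y - 1 := by rw [abs_sub_comm]; rw [abs_of_nonneg]; ring_nf; linarith
    rw [this, abs_neg, abs_one]
    linarith
  · rw [hT2 x ⟨hx, hx1⟩, hT1 y ⟨hy0, hy⟩]
    have e1 : x - y + (2 - x) - (1 - y) = 1 := by ring
    have e2 : x - y + (2 - x) - y = 2 - 2*y := by ring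
    rw [e1, e2, abs_one]
    have : |2 - 2*y| = 2 - 2*y := abs_of_nonneg (by linarith)
    rw [this]
    linarith
  · rw [hT2 x ⟨hx, hx1⟩, hT2 y ⟨hy, hy1⟩]
    have : x - y + (2 - x) - (2 - y) = 0 := by ring
    rw [this, abs_zero]
    positivity
end

section
/- Let T : [0,4/3] → [0,4/3] be defined by Tx = 1 − x if x ∈ [0,2/3) and Tx = 2 − x if x ∈ [2/3,4/3]. Then T is not an almost contraction: there are no constants δ ∈ (0,1) and L ≥ 0 such that |Tx − Ty| ≤ δ|x−y| + L|y − Tx| for all x,y ∈ [0,4/3]. (In fact, the inequality already fails at x = 7/15, y = 8/15 for every δ ∈ (0,1) and L ≥ 0.) -/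
/-- **Example.** The map `T : [0,4/3] → [0,4/3]` defined by `Tx = 1 − x` on
`[0,2/3)` and `Tx = 2 − x` on `[2/3,4/3]` is not an almost contraction: for
every `δ ∈ (0,1)` and `L ≥ 0` the almost contraction inequality fails; in fact
it already fails at `x = 7/15`, `y = 8/15`. -/
theorem example_not_almost_contraction
    (T : ℝ → ℝ)
    (hT1 : ∀ x ∈ Set.Ico (0 : ℝ) (2 / 3), T x = 1 - x)
    (hT2 : ∀ x ∈ Set.Icc (2 / 3 : ℝ) (4 / 3), T x = 2 - x) :
    (¬ ∃ δ ∈ Set.Ioo (0 : ℝ) 1, ∃ L : ℝ, 0 ≤ L ∧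
      ∀ x ∈ Set.Icc (0 : ℝ) (4 / 3), ∀ y ∈ Set.Icc (0 : ℝ) (4 / 3),
        |T x - T y| ≤ δ * |x - y| + L * |y - T x|) ∧
    (∀ δ ∈ Set.Ioo (0 : ℝ) 1, ∀ L : ℝ, 0 ≤ L →
      ¬ |T (7 / 15) - T (8 / 15)| ≤
          δ * |(7 / 15 : ℝ) - 8 / 15| + L * |(8 / 15 : ℝ) - T (7 / 15)|) := by
  have h7 : T (7 / 15) = 8 / 15 := by
    rw [hT1 (7/15) (by constructor <;> norm_num)]; norm_num
  have h8 : T (8 / 15) = 7 / 15 := by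
    rw [hT1 (8/15) (by constructor <;> norm_num)]; norm_num
  have key : ∀ δ ∈ Set.Ioo (0 : ℝ) 1, ∀ L : ℝ, 0 ≤ L →
      ¬ |T (7 / 15) - T (8 / 15)| ≤
          δ * |(7 / 15 : ℝ) - 8 / 15| + L * |(8 / 15 : ℝ) - T (7 / 15)| := by
    intro δ hδ L _ h
    rw [h7, h8] at h
    have : |(8:ℝ)/15 - 7/15| = 1/15 := by rw [abs_of_pos] <;> norm_num
    have h2 : |(7:ℝ)/15 - 8/15| = 1/15 := by rw [abs_of_neg] <;> norm_num
    have h3 : |(8:ℝ)/15 - 8/15| = 0 := by norm_num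
    rw [this, h2, h3, mul_zero, add_zero] at h
    nlinarith [hδ.2]
  refine ⟨?_, key⟩
  rintro ⟨δ, hδ, L, hL, h⟩
  exact key δ hδ L hL (h _ (by constructor <;> norm_num) _ (by constructor <;> norm_num))
end

section
/- Let T : [0,4/3] → [0,4/3] be defined by Tx = 1 − x if x ∈ [0,2/3) and Tx = 2 − x if x ∈ [2/3,4/3]. Then T is not an enriched nonexpansive mapping: there is no b ∈ [0,∞) such that |b(x−y) + Tx − Ty| ≤ (b+1)|x−y| for all x,y ∈ [0,4/3]. (In fact, for every b ≥ 0 the inequality fails at x = 2/3, y = 1/2.) -/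
/-- **Example.** The map `T : [0,4/3] → [0,4/3]` defined by `Tx = 1 − x` on
`[0,2/3)` and `Tx = 2 − x` on `[2/3,4/3]` is not an enriched nonexpansive
mapping: for every `b ≥ 0` the enriched nonexpansiveness inequality fails at
`x = 2/3`, `y = 1/2`. -/
theorem example_not_enriched_nonexpansive
    (T : ℝ → ℝ)
    (hT1 : ∀ x ∈ Set.Ico (0 : ℝ) (2 / 3), T x = 1 - x)
    (hT2 : ∀ x ∈ Set.Icc (2 / 3 : ℝ) (4 / 3), T x = 2 - x) :
    (¬ ∃ b : ℝ, 0 ≤ b ∧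
      ∀ x ∈ Set.Icc (0 : ℝ) (4 / 3), ∀ y ∈ Set.Icc (0 : ℝ) (4 / 3),
        |b * (x - y) + T x - T y| ≤ (b + 1) * |x - y|) ∧
    (∀ b : ℝ, 0 ≤ b →
      ¬ |b * ((2 / 3 : ℝ) - 1 / 2) + T (2 / 3) - T (1 / 2)| ≤
          (b + 1) * |(2 / 3 : ℝ) - 1 / 2|) := by
  have h23 : T (2/3) = 4/3 := by
    rw [hT2 (2/3) ⟨le_refl _, by norm_num⟩]; norm_num
  have h12 : T (1/2) = 1/2 := by
    rw [hT1 (1/2) ⟨by norm_num, by norm_num⟩]; norm_num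
  have key : ∀ b : ℝ, 0 ≤ b →
      ¬ |b * ((2 / 3 : ℝ) - 1 / 2) + T (2 / 3) - T (1 / 2)| ≤
          (b + 1) * |(2 / 3 : ℝ) - 1 / 2| := by
    intro b hb h
    rw [h23, h12] at h
    have h1 : |b * ((2/3:ℝ) - 1/2) + 4/3 - 1/2| = b/6 + 5/6 := by
      rw [abs_of_nonneg (by nlinarith)]; ring
    have h2 : |(2/3:ℝ) - 1/2| = 1/6 := by
      rw [abs_of_nonneg (by norm_num)]; norm_num
    rw [h1, h2] at h
    nlinarith
  refine ⟨?_, key⟩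
  rintro ⟨b, hb, h⟩
  exact key b hb (h (2/3) ⟨by norm_num, by norm_num⟩ (1/2) ⟨by norm_num, by norm_num⟩)
end

section
/- Let H be a real Hilbert space, C ⊆ H a nonempty closed convex set, γ > 0, and G : H → H. Let P_C : H → C denote the nearest point projection onto C (i.e. for each z ∈ H, P_C z ∈ C and ‖z − P_C z‖ ≤ ‖z − y‖ for all y ∈ C). Suppose the map T : C → C defined by Tx = P_C(x − γGx) is a (k,θ,L)-enriched almost contraction on C, i.e. k ∈ [0,∞), θ ∈ (0,k+1), L ≥ 0 and ‖k(x−y) + Tx − Ty‖ ≤ θ‖x−y‖ + L‖k(x−y) + Tx − y‖ for all x,y ∈ C. Then there exists λ ∈ (0,1] such that for every x₀ ∈ C the iterative algorithm xₙ₊₁ = (1−λ)xₙ + λP_C(xₙ − γGxₙ) converges strongly to a point x* ∈ C satisfying P_C(x* − γGx*) = x*, that is, to a solution of the variational inequality problem ⟨Gx*, x − x*⟩ ≥ 0 for all x ∈ C. -/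
open RealInnerProductSpace

/-- **Theorem (application to variational inequalities).** Let `H` be a real
Hilbert space, `C ⊆ H` nonempty closed convex, `γ > 0`, `G : H → H`, and let
`P` be the nearest point projection onto `C`. If `T x = P(x − γGx)` is a
`(k,θ,L)`-enriched almost contraction on `C`, then there exists `λ ∈ (0,1]`
such that for every `x₀ ∈ C` the Krasnoselskij projection algorithm
`xₙ₊₁ = (1−λ)xₙ + λP(xₙ − γGxₙ)` converges strongly to a point `x* ∈ C` with
`P(x* − γGx*) = x*`, i.e. a solution of the variational inequality
`⟨Gx*, x − x*⟩ ≥ 0` for all `x ∈ C`. -/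
theorem krasnoselskij_projection_converges_to_VIP_solution
    {H : Type*} [NormedAddCommGroup H] [InnerProductSpace ℝ H] [CompleteSpace H]
    (C : Set H) (hC : C.Nonempty) (hCc : IsClosed C) (hCv : Convex ℝ C)
    (γ : ℝ) (hγ : 0 < γ) (G : H → H)
    (P : H → H) (hPmem : ∀ z : H, P z ∈ C)
    (hPproj : ∀ z : H, ∀ y ∈ C, ‖z - P z‖ ≤ ‖z - y‖)
    (k θ L : ℝ) (hk : 0 ≤ k) (hθ : θ ∈ Set.Ioo 0 (k + 1)) (hL : 0 ≤ L)
    (hT : ∀ x ∈ C, ∀ y ∈ C,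
      ‖k • (x - y) + P (x - γ • G x) - P (y - γ • G y)‖ ≤
        θ * ‖x - y‖ + L * ‖k • (x - y) + P (x - γ • G x) - y‖) :
    ∃ lam ∈ Set.Ioc (0 : ℝ) 1,
      ∀ x₀ ∈ C, ∃ xs ∈ C,
        P (xs - γ • G xs) = xs ∧
        (∀ x ∈ C, 0 ≤ ⟪G xs, x - xs⟫) ∧
        Filter.Tendsto
          (fun n => (fun z => (1 - lam) • z + lam • P (z - γ • G z))^[n] x₀)
          Filter.atTop (nhds xs) := by
  obtain ⟨hθ0, hθ1⟩ := hθ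
  have hkp : (0:ℝ) < k + 1 := by linarith
  set lam : ℝ := (k + 1)⁻¹ with hlamdef
  have hlam0 : 0 < lam := by positivity
  have hlam1 : lam ≤ 1 := by
    rw [hlamdef]
    rw [inv_le_one_iff₀]
    right; linarith
  set c : ℝ := θ / (k + 1) with hcdef
  have hc0 : 0 < c := div_pos hθ0 hkp
  have hc1 : c < 1 := (div_lt_one hkp).2 hθ1
  set T : H → H := fun z => P (z - γ • G z) with hTdef
  set f : H → H := fun z => (1 - lam) • z + lam • T z with hfdef
  have hfC : ∀ z ∈ C, f z ∈ C := fun z hz =>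
    hCv hz (hPmem _) (by linarith) hlam0.le (by ring)
  have key : ∀ x ∈ C, ∀ y ∈ C, ‖f x - f y‖ ≤ c * ‖x - y‖ + L * ‖f x - y‖ := by
    intro x hx y hy
    have h1 : f x - f y = lam • (k • (x - y) + T x - T y) := by
      simp only [hfdef, hlamdef]
      match_scalars <;> field_simp <;> ring
    have h2 : k • (x - y) + T x - y = (k + 1) • (f x - y) := by
      simp only [hfdef, hlamdef]
      match_scalars <;> (field_simp; try ring)
    have h3 := hT x hx y hy
    calc ‖f x - f y‖ = lam * ‖k • (x - y) + T x - T y‖ := by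
          rw [h1, norm_smul, Real.norm_eq_abs, abs_of_pos hlam0]
      _ ≤ lam * (θ * ‖x - y‖ + L * ‖k • (x - y) + T x - y‖) := by
          exact mul_le_mul_of_nonneg_left h3 hlam0.le
      _ = c * ‖x - y‖ + L * ‖f x - y‖ := by
          rw [h2, norm_smul, Real.norm_eq_abs, abs_of_pos hkp, hcdef, hlamdef]
          field_simp
  refine ⟨lam, ⟨hlam0, hlam1⟩, ?_⟩
  intro x₀ hx₀
  set x : ℕ → H := fun n => f^[n] x₀ with hxdef
  have hstep : ∀ n, x (n + 1) = f (x n) := fun n =>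
    Function.iterate_succ_apply' f n x₀
  have hxC : ∀ n, x n ∈ C := by
    intro n
    induction n with
    | zero => exact hx₀
    | succ n ih => rw [hstep]; exact hfC _ ih
  have hd : ∀ n, ‖x (n + 1) - x (n + 2)‖ ≤ c * ‖x n - x (n + 1)‖ := by
    intro n
    have h := key (x n) (hxC n) (x (n + 1)) (hxC (n + 1))
    rw [← hstep n, ← hstep (n + 1)] at h
    simpa [sub_self] using h
  have hgeo : ∀ n, ‖x n - x (n + 1)‖ ≤ ‖x 0 - x 1‖ * c ^ n := by
    intro n
    induction n with
    | zero => simp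
    | succ n ih =>
        calc ‖x (n + 1) - x (n + 2)‖ ≤ c * ‖x n - x (n + 1)‖ := hd n
          _ ≤ c * (‖x 0 - x 1‖ * c ^ n) := by
              exact mul_le_mul_of_nonneg_left ih hc0.le
          _ = ‖x 0 - x 1‖ * c ^ (n + 1) := by ring
  have hcauchy : CauchySeq x :=
    cauchySeq_of_le_geometric c ‖x 0 - x 1‖ hc1
      (fun n => by rw [dist_eq_norm]; exact hgeo n)
  obtain ⟨xs, hxs⟩ := cauchySeq_tendsto_of_complete hcauchy
  have hxsC : xs ∈ C := hCc.mem_of_tendsto hxs (Filter.Eventually.of_forall hxC)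
  have h1 : Filter.Tendsto (fun n => x (n + 1)) Filter.atTop (nhds xs) :=
    hxs.comp (Filter.tendsto_add_atTop_nat 1)
  have h2 : Filter.Tendsto (fun n => x (n + 1)) Filter.atTop (nhds (f xs)) := by
    rw [tendsto_iff_norm_sub_tendsto_zero]
    have hb : ∀ n, ‖x (n + 1) - f xs‖ ≤ c * ‖x n - xs‖ + L * ‖x (n + 1) - xs‖ := by
      intro n
      have h := key (x n) (hxC n) xs hxsC
      rwa [← hstep n] at h
    have hlim : Filter.Tendsto (fun n => c * ‖x n - xs‖ + L * ‖x (n + 1) - xs‖)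
        Filter.atTop (nhds 0) := by
      have h' : Filter.Tendsto (fun n => c * ‖x n - xs‖ + L * ‖x (n + 1) - xs‖)
          Filter.atTop (nhds (c * 0 + L * 0)) := by
        apply Filter.Tendsto.add
        · exact (tendsto_iff_norm_sub_tendsto_zero.1 hxs).const_mul c
        · exact (tendsto_iff_norm_sub_tendsto_zero.1 h1).const_mul L
      simpa using h'
    exact squeeze_zero' (Filter.Eventually.of_forall fun n => norm_nonneg _)
      (Filter.Eventually.of_forall hb) hlim
  have hfix : f xs = xs := tendsto_nhds_unique h2 h1
  have hTfix : T xs = xs := by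
    have h0 : (1 - lam) • xs + lam • T xs = xs := hfix
    have h' : lam • (T xs - xs) = (0 : H) := by
      linear_combination (norm := module) h0
    rcases smul_eq_zero.1 h' with h | h
    · exact absurd h hlam0.ne'
    · exact sub_eq_zero.1 h
  refine ⟨xs, hxsC, hTfix, ?_, hxs⟩
  intro z hz
  set u : H := xs - γ • G xs with hu
  have hmin : ‖u - xs‖ = ⨅ w : C, ‖u - w‖ := by
    have hne : Nonempty C := ⟨⟨xs, hxsC⟩⟩
    apply le_antisymm
    · apply le_ciInf
      intro w
      have := hPproj u w w.2
      rwa [show P u = xs from hTfix] at this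
    · have hbdd : BddBelow (Set.range fun w : C => ‖u - w‖) :=
        ⟨0, Set.forall_mem_range.2 fun w => norm_nonneg _⟩
      exact ciInf_le hbdd ⟨xs, hxsC⟩
  have hineq := (norm_eq_iInf_iff_real_inner_le_zero hCv hxsC).1 hmin z hz
  have : u - xs = -(γ • G xs) := by rw [hu]; abel
  rw [this] at hineq
  rw [inner_neg_left, real_inner_smul_left] at hineq
  nlinarith [hineq]
end
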